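/- Fix nonnegative integers i, j with j ≤ i. Let O(i,j) be the disjoint union over 0 ≤ k ≤ j of the sets O(i,j,k) of overpartitions with exactly k nonnegative parts, each part at most j−1, and such that for each 1 ≤ s ≤ k−1, if j−s occurs as a part there are at least k−s overlined parts to its right (with the empty overpartition the sole element of O(i,j,0)). Then ∑_{λ ∈ O(i,j)} (-1)^{ol(λ)} q^{|λ| + ol(λ)(i−ℓ(λ)+1)} q^{(i−ℓ(λ))(j−ℓ(λ))} = 1, where ℓ(λ) is the number of parts and ol(λ) the number of overlined parts of λ. -/

import Mathlib

open Finset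
open scoped Classical

/-- The variable `q`, as a rational function over `ℚ`. -/
noncomputable def q : RatFunc ℚ := RatFunc.X

/-- The q-shifted factorial `(a; q)_k`. -/
noncomputable def qPoch (a : RatFunc ℚ) (k : ℕ) : RatFunc ℚ :=
  ∏ s ∈ Finset.range k, (1 - a * q ^ s)

/-- The Gaussian (q-binomial) coefficient. -/
noncomputable def qbinom (j k : ℕ) : RatFunc ℚ :=
  qPoch q j / (qPoch q k * qPoch q (j - k))

/-- The set `O(i,j,k)` of overpartitions with exactly `k` nonnegative parts, each part at
most `j-1` (encoded as a weakly decreasing function `Fin k → Fin j` together with an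
overlining indicator `Fin k → Bool`, where only first occurrences may be overlined),
such that for each `1 ≤ s ≤ k-1`, if `j-s` occurs as a part then there are at least
`k-s` overlined parts strictly to its right. (It does not depend on `i`.) -/
noncomputable def AGset (j k : ℕ) : Finset ((Fin k → Fin j) × (Fin k → Bool)) :=
  Finset.univ.filter (fun p =>
    (∀ a b : Fin k, a ≤ b → (p.1 b : ℕ) ≤ (p.1 a : ℕ)) ∧
    (∀ a : Fin k, p.2 a = true → ∀ b : Fin k, b < a → p.1 b ≠ p.1 a) ∧
    (∀ s ∈ Finset.Icc 1 (k - 1), ∀ a : Fin k, (p.1 a : ℕ) = j - s →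
      k - s ≤ (Finset.univ.filter (fun b : Fin k => a < b ∧ p.2 b = true)).card))

/-- The number of overlined parts of an overpartition. -/
def ol {j k : ℕ} (p : (Fin k → Fin j) × (Fin k → Bool)) : ℕ :=
  (Finset.univ.filter (fun a : Fin k => p.2 a = true)).card

/-- The size (sum of parts) of an overpartition. -/
def psize {j k : ℕ} (p : (Fin k → Fin j) × (Fin k → Bool)) : ℕ :=
  ∑ a, (p.1 a : ℕ)

noncomputable def Bbox (m k : ℕ) : Finset (Fin k → Fin (m+1)) :=
  Finset.univ.filter (fun μ => ∀ a b : Fin k, a ≤ b → (μ b : ℕ) ≤ (μ a : ℕ))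
noncomputable def Psum (m k : ℕ) : RatFunc ℚ := ∑ μ ∈ Bbox m k, q ^ (∑ a, (μ a : ℕ))

lemma mem_Bbox {m k : ℕ} {μ : Fin k → Fin (m+1)} :
    μ ∈ Bbox m k ↔ ∀ a b : Fin k, a ≤ b → (μ b : ℕ) ≤ (μ a : ℕ) := by
  simp [Bbox]

lemma snoc_anti {m k : ℕ} (ν : Fin k → Fin (m+2))
    (hν : ∀ a b : Fin k, a ≤ b → (ν b : ℕ) ≤ (ν a : ℕ)) (a b : Fin (k+1)) (hab : a ≤ b) :
    (((Fin.snoc ν 0 : Fin (k+1) → Fin (m+2)) b) : ℕ) ≤ ((Fin.snoc ν 0 : Fin (k+1) → Fin (m+2)) a : ℕ) := by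
  rcases Fin.eq_castSucc_or_eq_last b with ⟨b', rfl⟩ | rfl
  · rcases Fin.eq_castSucc_or_eq_last a with ⟨a', rfl⟩ | rfl
    · simp only [Fin.snoc_castSucc]
      exact hν a' b' (by exact_mod_cast hab)
    · exfalso
      have := Fin.castSucc_lt_last b'
      have h1 : (Fin.last k : ℕ) ≤ (b'.castSucc : ℕ) := hab
      have h2 : (b'.castSucc : ℕ) < (Fin.last k : ℕ) := this
      omega
  · simp [Fin.snoc_last]

lemma Psum_pascal (m k : ℕ) :
    Psum (m+1) (k+1) = q ^ (k+1) * Psum m (k+1) + Psum (m+1) k := by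
  classical
  rw [Psum, ← Finset.sum_filter_add_sum_filter_not (Bbox (m+1) (k+1))
    (fun μ => μ (Fin.last k) ≠ 0)]
  congr 1
  · -- all parts ≥ 1 part
    rw [Psum, Finset.mul_sum]
    refine Finset.sum_nbij' (fun μ a => (⟨(μ a : ℕ) - 1, by have := (μ a).isLt; omega⟩ : Fin (m+1)))
      (fun ν a => (⟨(ν a : ℕ) + 1, by have := (ν a).isLt; omega⟩ : Fin (m+2))) ?_ ?_ ?_ ?_ ?_
    · intro μ hμ
      rw [Finset.mem_filter, mem_Bbox] at hμ
      rw [mem_Bbox]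
      intro a b hab
      exact Nat.sub_le_sub_right (hμ.1 a b hab) 1
    · intro ν hν
      rw [mem_Bbox] at hν
      rw [Finset.mem_filter, mem_Bbox]
      refine ⟨fun a b hab => by simpa using hν a b hab, ?_⟩
      simp only [ne_eq, Fin.ext_iff, Fin.val_zero]; omega
    · intro μ hμ
      rw [Finset.mem_filter, mem_Bbox] at hμ
      have hpos : ∀ a, 1 ≤ (μ a : ℕ) := by
        intro a
        have h1 := hμ.1 a (Fin.last k) (Fin.le_last a)
        have h2 : (μ (Fin.last k) : ℕ) ≠ 0 := fun h => hμ.2 (Fin.ext h)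
        omega
      funext a; exact Fin.ext (by simp [Nat.sub_add_cancel (hpos a)])
    · intro ν _; funext a; exact Fin.ext (by simp)
    · intro μ hμ
      rw [Finset.mem_filter, mem_Bbox] at hμ
      have hpos : ∀ a, 1 ≤ (μ a : ℕ) := by
        intro a
        have h1 := hμ.1 a (Fin.last k) (Fin.le_last a)
        have h2 : (μ (Fin.last k) : ℕ) ≠ 0 := fun h => hμ.2 (Fin.ext h)
        omega
      rw [← pow_add]
      congr 1
      calc ∑ a, ((μ a : ℕ))
          = ∑ a : Fin (k+1), (1 + ((μ a : ℕ) - 1)) :=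
            Finset.sum_congr rfl (fun a _ => by have := hpos a; omega)
        _ = (∑ _a : Fin (k+1), 1) + ∑ a : Fin (k+1), ((μ a : ℕ) - 1) := Finset.sum_add_distrib
        _ = (k + 1) + ∑ a : Fin (k+1), ((μ a : ℕ) - 1) := by simp
  · -- last part = 0
    rw [Psum]
    refine Finset.sum_nbij' (fun μ => μ ∘ Fin.castSucc) (fun ν => Fin.snoc ν 0) ?_ ?_ ?_ ?_ ?_
    · intro μ hμ
      rw [Finset.mem_filter, mem_Bbox] at hμ
      rw [mem_Bbox]
      intro a b hab
      exact hμ.1 _ _ (by simpa using hab)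
    · intro ν hν
      rw [mem_Bbox] at hν
      rw [Finset.mem_filter, mem_Bbox]
      refine ⟨snoc_anti ν hν, ?_⟩
      simp
    · intro μ hμ
      rw [Finset.mem_filter, mem_Bbox, not_not] at hμ
      funext a
      refine Fin.lastCases ?_ ?_ a
      · simp [Fin.snoc_last, hμ.2]
      · intro a'; simp
    · intro ν _; funext a; simp
    · intro μ hμ
      rw [Finset.mem_filter, mem_Bbox, not_not] at hμ
      congr 1
      rw [Fin.sum_univ_castSucc]
      simp [hμ.2]




lemma Psum_zero_right (m : ℕ) : Psum m 0 = 1 := by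
  simp [Psum, Bbox, Finset.filter_true_of_mem, Finset.univ_unique]

lemma Psum_zero_left (k : ℕ) : Psum 0 k = 1 := by
  have h : (Bbox 0 k) = Finset.univ := by
    apply Finset.filter_true_of_mem
    intro μ _ a b _
    have h1 := (μ b).isLt
    have h2 := (μ a).isLt
    omega
  have h2 : ∀ μ : Fin k → Fin 1, ∑ a, ((μ a : ℕ)) = 0 := by
    intro μ
    apply Finset.sum_eq_zero
    intro a _
    omega
  rw [Psum, h]
  have : ∀ μ ∈ (Finset.univ : Finset (Fin k → Fin 1)), q ^ (∑ a, ((μ a : ℕ))) = 1 := by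
    intro μ _; rw [h2, pow_zero]
  rw [Finset.sum_congr rfl this, Finset.sum_const]
  have : (Finset.univ : Finset (Fin k → Fin 1)).card = 1 := by
    simp [Finset.card_univ]
  rw [this, one_smul]


/-- number of overlined entries -/
def wB {k : ℕ} (T : Fin k → Bool) : ℕ := (Finset.univ.filter (fun a : Fin k => T a = true)).card
/-- sum of positions of overlined entries -/
def vB {k : ℕ} (T : Fin k → Bool) : ℕ := ∑ a ∈ Finset.univ.filter (fun a : Fin k => T a = true), (a : ℕ)
/-- number of overlined entries strictly to the right of `a` -/
def rk {k : ℕ} (T : Fin k → Bool) (a : Fin k) : ℕ :=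
  (Finset.univ.filter (fun b : Fin k => a < b ∧ T b = true)).card

lemma prod_expand (k c : ℕ) :
    ∏ s ∈ Finset.range k, (1 - q ^ (c + s)) =
    ∑ T ∈ (Finset.univ : Finset (Fin k → Bool)), (-1 : RatFunc ℚ) ^ (wB T) * q ^ (wB T * c + vB T) := by
  rw [← Fin.prod_univ_eq_prod_range (fun s => (1 : RatFunc ℚ) - q ^ (c + s))]
  have h1 : ∀ a : Fin k, (1 : RatFunc ℚ) - q ^ (c + (a : ℕ)) =
      ∑ b ∈ (Finset.univ : Finset Bool), (if b = true then -q ^ (c + (a : ℕ)) else 1) := by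
    intro a
    rw [Fintype.sum_bool]
    simp only [Bool.false_eq_true, if_false, if_true]
    ring
  rw [Finset.prod_congr rfl (fun a _ => h1 a), Finset.prod_univ_sum]
  rw [Fintype.piFinset_univ]
  apply Finset.sum_congr rfl
  intro T _
  calc ∏ a : Fin k, (if T a = true then -q ^ (c + (a : ℕ)) else 1)
      = ∏ a ∈ Finset.univ.filter (fun a : Fin k => T a = true), (-q ^ (c + (a : ℕ))) :=
        (Finset.prod_filter _ _).symm
    _ = ∏ a ∈ Finset.univ.filter (fun a : Fin k => T a = true), ((-1) * q ^ (c + (a : ℕ))) := by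
        simp [neg_one_mul]
    _ = ((-1 : RatFunc ℚ) ^ (wB T)) * q ^ (∑ a ∈ Finset.univ.filter (fun a : Fin k => T a = true), (c + (a : ℕ))) := by
        rw [Finset.prod_mul_distrib, Finset.prod_const, Finset.prod_pow_eq_pow_sum]
        rfl
    _ = (-1 : RatFunc ℚ) ^ (wB T) * q ^ (wB T * c + vB T) := by
        congr 1
        rw [Finset.sum_add_distrib, Finset.sum_const, smul_eq_mul]
        rfl

lemma rk_sum {k : ℕ} (T : Fin k → Bool) : ∑ a, rk T a = vB T := by
  unfold rk vB
  have h1 : ∀ a : Fin k, (Finset.univ.filter (fun b : Fin k => a < b ∧ T b = true)).card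
      = ∑ b : Fin k, (if a < b ∧ T b = true then 1 else 0) := by
    intro a; rw [Finset.card_filter]
  rw [Finset.sum_congr rfl (fun a _ => h1 a), Finset.sum_comm]
  rw [Finset.sum_filter]
  apply Finset.sum_congr rfl
  intro b _
  by_cases hb : T b = true
  · simp only [hb, and_true, if_true]
    have : ∑ a : Fin k, (if a < b then 1 else 0) = (Finset.univ.filter (fun a : Fin k => a < b)).card :=
      (Finset.card_filter _ _).symm
    rw [this]
    have : Finset.univ.filter (fun a : Fin k => a < b) = Finset.Iio b := by
      ext c; simp
    rw [this, Fin.card_Iio]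
  · simp [hb]

lemma rk_anti {k : ℕ} (T : Fin k → Bool) {a b : Fin k} (hab : a ≤ b) : rk T b ≤ rk T a := by
  apply Finset.card_le_card
  intro c hc
  simp only [Finset.mem_filter, Finset.mem_univ, true_and] at hc ⊢
  exact ⟨lt_of_le_of_lt hab hc.1, hc.2⟩

lemma rk_pos_bound {k : ℕ} (T : Fin k → Bool) (a : Fin k) : rk T a + (a : ℕ) + 1 ≤ k := by
  have h1 : rk T a ≤ (Finset.Ioi a).card := by
    apply Finset.card_le_card
    intro c hc
    simp only [rk, Finset.mem_filter] at hc
    simp [Finset.mem_Ioi, hc.2.1]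
  rw [Fin.card_Ioi] at h1
  have := a.isLt
  omega

lemma rk_succ_of_lt {k : ℕ} (T : Fin k → Bool) {a b : Fin k} (hba : b < a) (ha : T a = true) :
    rk T a + 1 ≤ rk T b := by
  have hsub : insert a (Finset.univ.filter (fun c : Fin k => a < c ∧ T c = true)) ⊆
      Finset.univ.filter (fun c : Fin k => b < c ∧ T c = true) := by
    intro c hc
    rcases Finset.mem_insert.mp hc with rfl | hc
    · simp [hba, ha]
    · simp only [Finset.mem_filter, Finset.mem_univ, true_and] at hc ⊢
      exact ⟨lt_trans hba hc.1, hc.2⟩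
  have hnot : a ∉ Finset.univ.filter (fun c : Fin k => a < c ∧ T c = true) := by
    simp [lt_irrefl]
  have := Finset.card_le_card hsub
  rw [Finset.card_insert_of_notMem hnot] at this
  exact this

lemma key_inj {j k : ℕ} {p : (Fin k → Fin j) × (Fin k → Bool)}
    (hmono : ∀ a b : Fin k, a ≤ b → (p.1 b : ℕ) ≤ (p.1 a : ℕ))
    (hfirst : ∀ a : Fin k, p.2 a = true → ∀ b : Fin k, b < a → p.1 b ≠ p.1 a)
    (a b : Fin k) (hab : a ≤ b) :
    (Finset.univ.filter (fun c : Fin k => a < c ∧ c ≤ b ∧ p.2 c = true)).card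
      ≤ (p.1 a : ℕ) - (p.1 b : ℕ) := by
  have := Finset.card_le_card_of_injOn
    (s := Finset.univ.filter (fun c : Fin k => a < c ∧ c ≤ b ∧ p.2 c = true))
    (t := Finset.Ico ((p.1 b : ℕ)) ((p.1 a : ℕ))) (fun c : Fin k => (p.1 c : ℕ)) ?_ ?_
  · rwa [Nat.card_Ico] at this
  · intro c hc
    simp only [Finset.coe_filter, Finset.mem_filter, Finset.mem_univ, true_and, Set.mem_setOf_eq] at hc
    show (p.1 c : ℕ) ∈ Finset.Ico ((p.1 b : ℕ)) ((p.1 a : ℕ))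
    rw [Finset.mem_Ico]
    refine ⟨hmono c b hc.2.1, ?_⟩
    have h1 : (p.1 c : ℕ) ≤ (p.1 a : ℕ) := hmono a c (le_of_lt hc.1)
    have h2 : p.1 a ≠ p.1 c := hfirst c hc.2.2 a hc.1
    have h3 : (p.1 c : ℕ) ≠ (p.1 a : ℕ) := fun h => h2 (Fin.ext h.symm)
    omega
  · intro c hc c' hc' hcc
    simp only [Finset.coe_filter, Set.mem_setOf_eq, Finset.mem_univ, true_and] at hc hc'
    by_contra hne
    rcases lt_or_gt_of_ne (fun h : c = c' => hne h) with h | h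
    · exact hfirst c' hc'.2.2 c h (Fin.ext hcc)
    · exact hfirst c hc.2.2 c' h (Fin.ext hcc.symm)

lemma rk_le_val {j k : ℕ} {p : (Fin k → Fin j) × (Fin k → Bool)}
    (hmono : ∀ a b : Fin k, a ≤ b → (p.1 b : ℕ) ≤ (p.1 a : ℕ))
    (hfirst : ∀ a : Fin k, p.2 a = true → ∀ b : Fin k, b < a → p.1 b ≠ p.1 a)
    (a : Fin k) : rk p.2 a ≤ (p.1 a : ℕ) := by
  have hk : 0 < k := a.pos
  set b0 : Fin k := ⟨k - 1, by omega⟩ with hb0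
  have hsame : Finset.univ.filter (fun b : Fin k => a < b ∧ p.2 b = true)
      = Finset.univ.filter (fun c : Fin k => a < c ∧ c ≤ b0 ∧ p.2 c = true) := by
    apply Finset.filter_congr
    intro c _
    have : c ≤ b0 := by
      rw [Fin.le_def]
      have := c.isLt
      simp only [hb0]
      omega
    simp [this]
  have h1 : rk p.2 a ≤ (p.1 a : ℕ) - (p.1 b0 : ℕ) := by
    rw [rk, hsame]
    exact key_inj hmono hfirst a b0 (by rw [Fin.le_def]; have := a.isLt; simp only [hb0]; omega)
  omega

lemma rk_diff {j k : ℕ} {p : (Fin k → Fin j) × (Fin k → Bool)}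
    (hmono : ∀ a b : Fin k, a ≤ b → (p.1 b : ℕ) ≤ (p.1 a : ℕ))
    (hfirst : ∀ a : Fin k, p.2 a = true → ∀ b : Fin k, b < a → p.1 b ≠ p.1 a)
    {a b : Fin k} (hab : a ≤ b) :
    rk p.2 a ≤ rk p.2 b + ((p.1 a : ℕ) - (p.1 b : ℕ)) := by
  have hsplit : Finset.univ.filter (fun c : Fin k => a < c ∧ p.2 c = true)
      = (Finset.univ.filter (fun c : Fin k => a < c ∧ c ≤ b ∧ p.2 c = true))
        ∪ (Finset.univ.filter (fun c : Fin k => b < c ∧ p.2 c = true)) := by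
    ext c
    simp only [Finset.mem_filter, Finset.mem_univ, true_and, Finset.mem_union]
    constructor
    · rintro ⟨h1, h2⟩
      rcases le_or_gt c b with h | h
      · exact Or.inl ⟨h1, h, h2⟩
      · exact Or.inr ⟨h, h2⟩
    · rintro (⟨h1, _, h2⟩ | ⟨h1, h2⟩)
      · exact ⟨h1, h2⟩
      · exact ⟨lt_of_le_of_lt hab h1, h2⟩
  have hdisj : Disjoint (Finset.univ.filter (fun c : Fin k => a < c ∧ c ≤ b ∧ p.2 c = true))
      (Finset.univ.filter (fun c : Fin k => b < c ∧ p.2 c = true)) := by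
    rw [Finset.disjoint_left]
    intro c h1 h2
    simp only [Finset.mem_filter, Finset.mem_univ, true_and] at h1 h2
    exact absurd h2.1 (not_lt.mpr h1.2.1)
  have hcard : rk p.2 a = (Finset.univ.filter (fun c : Fin k => a < c ∧ c ≤ b ∧ p.2 c = true)).card
      + rk p.2 b := by
    rw [rk, hsplit, Finset.card_union_of_disjoint hdisj]; rfl
  have := key_inj hmono hfirst a b hab
  omega

lemma mem_AGset {j k : ℕ} {p : (Fin k → Fin j) × (Fin k → Bool)} :
    p ∈ AGset j k ↔
    (∀ a b : Fin k, a ≤ b → (p.1 b : ℕ) ≤ (p.1 a : ℕ)) ∧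
    (∀ a : Fin k, p.2 a = true → ∀ b : Fin k, b < a → p.1 b ≠ p.1 a) ∧
    (∀ s ∈ Finset.Icc 1 (k - 1), ∀ a : Fin k, (p.1 a : ℕ) = j - s →
      k - s ≤ (Finset.univ.filter (fun b : Fin k => a < b ∧ p.2 b = true)).card) := by
  simp [AGset]

lemma AG_inner_sum (j k c : ℕ) (hk : k ≤ j) :
    ∑ p ∈ AGset j k, (-1 : RatFunc ℚ) ^ ol p * q ^ (psize p + ol p * c)
    = Psum (j - k) k * ∏ s ∈ Finset.range k, (1 - q ^ (c + s)) := by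
  rw [prod_expand, Psum, Finset.sum_mul_sum]
  rw [← Finset.sum_product']
  refine Finset.sum_nbij'
    (fun p => ((fun a => (⟨min ((p.1 a : ℕ) - rk p.2 a) (j - k), by omega⟩ : Fin (j - k + 1))), p.2))
    (fun x => ((fun a => (⟨min ((x.1 a : ℕ) + rk x.2 a) (j - 1), by
        have h1 := a.pos
        have h2 : min ((x.1 a : ℕ) + rk x.2 a) (j - 1) ≤ j - 1 := min_le_right _ _
        omega⟩ : Fin j)), x.2))
    ?_ ?_ ?_ ?_ ?_
  · -- forward membership
    intro p hp
    rw [mem_AGset] at hp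
    obtain ⟨hmono, hfirst, hAG⟩ := hp
    have hrk : ∀ a, rk p.2 a ≤ (p.1 a : ℕ) := rk_le_val hmono hfirst
    have hbox : ∀ a : Fin k, (p.1 a : ℕ) - rk p.2 a ≤ j - k := by
      intro a
      by_cases hcase : (p.1 a : ℕ) ≤ j - k
      · omega
      · have hk0 : 0 < k := a.pos
        have hval := (p.1 a).isLt
        set s := j - (p.1 a : ℕ) with hs
        have hmem : s ∈ Finset.Icc 1 (k - 1) := by
          rw [Finset.mem_Icc]
          omega
        have := hAG s hmem a (by omega)
        have : k - s ≤ rk p.2 a := this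
        omega
    rw [Finset.mem_product]
    refine ⟨?_, Finset.mem_univ _⟩
    rw [mem_Bbox]
    intro a b hab
    simp only
    have h1 := hrk a
    have h2 := hrk b
    have h3 := hbox a
    have h4 := hbox b
    have h5 := rk_diff hmono hfirst hab
    have h6 := hmono a b hab
    omega
  · -- backward membership
    intro x hx
    rw [Finset.mem_product, mem_Bbox] at hx
    obtain ⟨hb, -⟩ := hx
    have hval : ∀ a : Fin k, (x.1 a : ℕ) ≤ j - k := fun a => by
      have := (x.1 a).isLt; omega
    have hb1 : ∀ a : Fin k, (x.1 a : ℕ) + rk x.2 a ≤ j - 1 := by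
      intro a
      have h1 := rk_pos_bound x.2 a
      have h2 := hval a
      have h3 := a.pos
      omega
    have hmin : ∀ a : Fin k, min ((x.1 a : ℕ) + rk x.2 a) (j - 1) = (x.1 a : ℕ) + rk x.2 a :=
      fun a => min_eq_left (hb1 a)
    rw [mem_AGset]
    refine ⟨?_, ?_, ?_⟩
    · intro a b hab
      simp only [hmin]
      exact Nat.add_le_add (hb a b hab) (rk_anti x.2 hab)
    · intro a ha b hba
      simp only
      intro heq
      have heq' : min ((x.1 b : ℕ) + rk x.2 b) (j - 1) = min ((x.1 a : ℕ) + rk x.2 a) (j - 1) :=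
        congrArg Fin.val heq
      rw [hmin a, hmin b] at heq'
      have h1 := rk_succ_of_lt x.2 hba ha
      have h2 := hb b a (le_of_lt hba)
      omega
    · intro s hs a hval'
      rw [Finset.mem_Icc] at hs
      simp only [hmin] at hval'
      have h2 := hval a
      have h3 : (Finset.univ.filter (fun b : Fin k => a < b ∧ x.2 b = true)).card = rk x.2 a := rfl
      rw [h3]
      omega
  · -- left inverse
    intro p hp
    rw [mem_AGset] at hp
    obtain ⟨hmono, hfirst, hAG⟩ := hp
    have hrk : ∀ a, rk p.2 a ≤ (p.1 a : ℕ) := rk_le_val hmono hfirst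
    have hbox : ∀ a : Fin k, (p.1 a : ℕ) - rk p.2 a ≤ j - k := by
      intro a
      by_cases hcase : (p.1 a : ℕ) ≤ j - k
      · omega
      · have hk0 : 0 < k := a.pos
        have hval := (p.1 a).isLt
        set s := j - (p.1 a : ℕ) with hs
        have hmem : s ∈ Finset.Icc 1 (k - 1) := by rw [Finset.mem_Icc]; omega
        have := hAG s hmem a (by omega)
        have : k - s ≤ rk p.2 a := this
        omega
    refine Prod.ext ?_ rfl
    funext a
    apply Fin.ext
    simp only
    have h1 := hrk a
    have h2 := hbox a
    have h3 := (p.1 a).isLt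
    omega
  · -- right inverse
    intro x hx
    rw [Finset.mem_product, mem_Bbox] at hx
    obtain ⟨hb, -⟩ := hx
    have hval : ∀ a : Fin k, (x.1 a : ℕ) ≤ j - k := fun a => by
      have := (x.1 a).isLt; omega
    have hb1 : ∀ a : Fin k, (x.1 a : ℕ) + rk x.2 a ≤ j - 1 := by
      intro a
      have h1 := rk_pos_bound x.2 a
      have h2 := hval a
      have h3 := a.pos
      omega
    refine Prod.ext ?_ rfl
    funext a
    apply Fin.ext
    simp only
    have h1 := hb1 a
    have h2 := hval a
    have h3 := a.pos
    omega
  · -- value equality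
    intro p hp
    rw [mem_AGset] at hp
    obtain ⟨hmono, hfirst, hAG⟩ := hp
    have hrk : ∀ a, rk p.2 a ≤ (p.1 a : ℕ) := rk_le_val hmono hfirst
    have hbox : ∀ a : Fin k, (p.1 a : ℕ) - rk p.2 a ≤ j - k := by
      intro a
      by_cases hcase : (p.1 a : ℕ) ≤ j - k
      · omega
      · have hk0 : 0 < k := a.pos
        have hval := (p.1 a).isLt
        set s := j - (p.1 a : ℕ) with hs
        have hmem : s ∈ Finset.Icc 1 (k - 1) := by rw [Finset.mem_Icc]; omega
        have := hAG s hmem a (by omega)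
        have : k - s ≤ rk p.2 a := this
        omega
    have hw : ol p = wB p.2 := rfl
    have hsum1 : ∑ a : Fin k, (min ((p.1 a : ℕ) - rk p.2 a) (j - k)) =
        ∑ a : Fin k, ((p.1 a : ℕ) - rk p.2 a) :=
      Finset.sum_congr rfl (fun a _ => min_eq_left (hbox a))
    have hsum2 : ∑ a : Fin k, ((p.1 a : ℕ) - rk p.2 a) + ∑ a, rk p.2 a = psize p := by
      rw [← Finset.sum_add_distrib]
      exact Finset.sum_congr rfl (fun a _ => Nat.sub_add_cancel (hrk a))
    have hsum3 : ∑ a, rk p.2 a = vB p.2 := rk_sum p.2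
    simp only
    rw [hw]
    have hexp : psize p + wB p.2 * c = (∑ a : Fin k, (min ((p.1 a : ℕ) - rk p.2 a) (j - k)))
        + (wB p.2 * c + vB p.2) := by
      rw [hsum1]
      omega
    rw [hexp, pow_add]
    ring

noncomputable def u (i j k : ℕ) : RatFunc ℚ :=
  Psum (j - k) k * (∏ s ∈ Finset.range k, (1 - q ^ (i - k + 1 + s))) * q ^ ((i - k) * (j - k))

lemma E_succ (i k : ℕ) (hik : k + 1 ≤ i) :
    ∏ s ∈ Finset.range (k+1), (1 - q ^ (i - (k+1) + 1 + s))
    = (1 - q ^ i) * ∏ s ∈ Finset.range k, (1 - q ^ ((i-1) - k + 1 + s)) := by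
  rw [Finset.prod_range_succ, mul_comm]
  have h1 : i - (k+1) + 1 + k = i := by omega
  rw [h1]
  congr 1
  apply Finset.prod_congr rfl
  intro s hs
  have h2 : i - (k+1) + 1 + s = (i-1) - k + 1 + s := by omega
  rw [h2]

lemma FF (j : ℕ) : ∀ i, j ≤ i →
    ∑ k ∈ Finset.range (j + 1), u i j k = 1 := by
  induction j with
  | zero =>
    intro i _
    simp [u, Psum_zero_right]
  | succ j ih =>
    intro i hji
    have key : ∀ k ∈ Finset.range (j + 2), u i (j+1) k =
        (if k ≤ j then q ^ i * u i j k else 0) +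
        (if k = 0 then 0 else
          Psum (j + 1 - k) (k - 1) * (∏ s ∈ Finset.range k, (1 - q ^ (i - k + 1 + s)))
            * q ^ ((i - k) * (j + 1 - k))) := by
      intro k hk
      rw [Finset.mem_range] at hk
      match k with
      | 0 =>
        rw [if_pos (Nat.zero_le j), if_pos rfl, add_zero]
        rw [u, u]
        simp only [Nat.sub_zero, Finset.range_zero, Finset.prod_empty, mul_one]
        rw [Psum_zero_right, Psum_zero_right]
        rw [show i * (j + 1) = i + i * j from by ring, pow_add]
        ring
      | (k' + 1) =>
        rw [if_neg (show ¬(k' + 1 = 0) from by omega)]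
        by_cases hkj : k' + 1 ≤ j
        · rw [if_pos hkj]
          have hpascal := Psum_pascal (j - (k' + 1)) k'
          rw [show (j - (k' + 1)) + 1 = j - k' from by omega] at hpascal
          rw [u, show j + 1 - (k' + 1) = j - k' from by omega, hpascal]
          rw [u]
          rw [add_mul, add_mul]
          congr 1
          · have he : (k' + 1) + (i - (k' + 1)) * (j - k') =
                i + (i - (k' + 1)) * (j - (k' + 1)) := by
              have h1 : j - k' = (j - (k' + 1)) + 1 := by omega
              rw [h1, Nat.mul_succ]
              omega
            calc q ^ (k' + 1) * Psum (j - (k' + 1)) (k' + 1)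
                  * (∏ s ∈ Finset.range (k' + 1), (1 - q ^ (i - (k' + 1) + 1 + s)))
                  * q ^ ((i - (k' + 1)) * (j - k'))
                = Psum (j - (k' + 1)) (k' + 1)
                  * (∏ s ∈ Finset.range (k' + 1), (1 - q ^ (i - (k' + 1) + 1 + s)))
                  * q ^ ((k' + 1) + (i - (k' + 1)) * (j - k')) := by
                  rw [pow_add]; ring
              _ = Psum (j - (k' + 1)) (k' + 1)
                  * (∏ s ∈ Finset.range (k' + 1), (1 - q ^ (i - (k' + 1) + 1 + s)))
                  * q ^ (i + (i - (k' + 1)) * (j - (k' + 1))) := by rw [he]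
              _ = q ^ i * (Psum (j - (k' + 1)) (k' + 1)
                  * (∏ s ∈ Finset.range (k' + 1), (1 - q ^ (i - (k' + 1) + 1 + s)))
                  * q ^ ((i - (k' + 1)) * (j - (k' + 1)))) := by rw [pow_add]; ring
        · rw [if_neg hkj]
          have hk1 : k' + 1 = j + 1 := by omega
          rw [u, hk1]
          rw [zero_add, show j + 1 - (j + 1) = 0 from by omega, Psum_zero_left,
            show (j + 1) - 1 = j from by omega, Psum_zero_left]
    rw [Finset.sum_congr rfl key, Finset.sum_add_distrib]
    have hA : ∑ k ∈ Finset.range (j + 2), (if k ≤ j then q ^ i * u i j k else 0) = q ^ i := by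
      rw [Finset.sum_range_succ, if_neg (by omega), add_zero]
      have : ∀ k ∈ Finset.range (j + 1), (if k ≤ j then q ^ i * u i j k else 0) = q ^ i * u i j k := by
        intro k hk
        rw [Finset.mem_range] at hk
        rw [if_pos (by omega)]
      rw [Finset.sum_congr rfl this, ← Finset.mul_sum, ih i (by omega), mul_one]
    have hB : ∑ k ∈ Finset.range (j + 2), (if k = 0 then 0 else
        Psum (j + 1 - k) (k - 1) * (∏ s ∈ Finset.range k, (1 - q ^ (i - k + 1 + s)))
          * q ^ ((i - k) * (j + 1 - k))) = 1 - q ^ i := by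
      rw [Finset.sum_range_succ']
      rw [if_pos rfl, add_zero]
      have : ∀ k ∈ Finset.range (j + 1), (if k + 1 = 0 then 0 else
          Psum (j + 1 - (k+1)) (k + 1 - 1) * (∏ s ∈ Finset.range (k+1), (1 - q ^ (i - (k+1) + 1 + s)))
            * q ^ ((i - (k+1)) * (j + 1 - (k+1)))) = (1 - q ^ i) * u (i - 1) j k := by
        intro k hk
        rw [Finset.mem_range] at hk
        rw [if_neg (by omega)]
        rw [E_succ i k (by omega)]
        rw [u]
        rw [show j + 1 - (k + 1) = j - k from by omega, show k + 1 - 1 = k from rfl,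
          show i - (k + 1) = (i - 1) - k from by omega]
        ring
      rw [Finset.sum_congr rfl this, ← Finset.mul_sum, ih (i-1) (by omega), mul_one]
    rw [hA, hB]
    ring


/-- Theorem 3.1: for `j ≤ i`, summing over `O(i,j) = ⨄_{k=0}^{j} O(i,j,k)`,
`∑_{λ ∈ O(i,j)} (-1)^{ol(λ)} q^{|λ| + ol(λ)(i-ℓ(λ)+1)} q^{(i-ℓ(λ))(j-ℓ(λ))} = 1`. -/
theorem AG_involution_identity (i j : ℕ) (hji : j ≤ i) :
    ∑ k ∈ Finset.range (j + 1), ∑ p ∈ AGset j k,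
      (-1 : RatFunc ℚ) ^ ol p * q ^ (psize p + ol p * (i - k + 1) + (i - k) * (j - k)) = 1 := by
  have step : ∀ k ∈ Finset.range (j + 1),
      (∑ p ∈ AGset j k,
        (-1 : RatFunc ℚ) ^ ol p * q ^ (psize p + ol p * (i - k + 1) + (i - k) * (j - k)))
      = u i j k := by
    intro k hk
    rw [Finset.mem_range] at hk
    have h1 : ∀ p ∈ AGset j k,
        (-1 : RatFunc ℚ) ^ ol p * q ^ (psize p + ol p * (i - k + 1) + (i - k) * (j - k))
        = ((-1 : RatFunc ℚ) ^ ol p * q ^ (psize p + ol p * (i - k + 1))) * q ^ ((i - k) * (j - k)) := by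
      intro p _
      rw [pow_add]
      ring
    rw [Finset.sum_congr rfl h1, ← Finset.sum_mul, AG_inner_sum j k (i - k + 1) (by omega), u]
  rw [Finset.sum_congr rfl step]
  exact FF j i hji
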